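/- Elimination of the last d−l arguments (first step in the proof of Theorem 3.1): Let d ≥ 1, 1 ≤ l ≤ d and t > 0. Let x : [0,∞) → ℝ be a càdlàg function such that the sequence n ↦ Σ_{i=1}^{⌊nt⌋} (Δ_i^n x)² converges in ℝ as n → ∞. Let L : ℝ^d → ℝ be continuous and set H(x₁,…,x_d) := |x₁|²⋯|x_l|² L(x₁,…,x_d). Then n^{-(d-l)} Σ_{i ∈ B_t^n(d)} [ H(Δ_{i₁}^n x, …, Δ_{i_d}^n x) − H(Δ_{i₁}^n x, …, Δ_{i_l}^n x, 0, …, 0) ] → 0 as n → ∞. -/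

import Mathlib

open Filter Topology

/-- The `i`-th increment of `x` at observation frequency `n`:
`Δᵢⁿ x = x(i/n) − x((i−1)/n)`. -/
noncomputable def incr (x : ℝ → ℝ) (n i : ℕ) : ℝ :=
  x ((i : ℝ) / n) - x (((i : ℝ) - 1) / n)

lemma sum_biUnion_le_aux {α β : Type*} [DecidableEq β] (s : Finset α) (t : α → Finset β)
    (f : β → ℝ) (hf : ∀ b, 0 ≤ f b) :
    ∑ x ∈ s.biUnion t, f x ≤ ∑ a ∈ s, ∑ x ∈ t a, f x := by
  classical
  induction s using Finset.induction_on with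
  | empty => simp
  | @insert a s ha ih =>
    rw [Finset.biUnion_insert, Finset.sum_insert ha]
    have h0 : 0 ≤ ∑ x ∈ t a ∩ s.biUnion t, f x := Finset.sum_nonneg fun b _ => hf b
    have h := Finset.sum_union_inter (s₁ := t a) (s₂ := s.biUnion t) (f := f)
    linarith

lemma card_filter_lt_aux (d l : ℕ) (hld : l ≤ d) :
    (Finset.univ.filter (fun j : Fin d => (j : ℕ) < l)).card = l := by
  have h : (Finset.univ.filter (fun j : Fin d => (j : ℕ) < l)) =
      (Finset.range l).attachFin (fun m hm => lt_of_lt_of_le (Finset.mem_range.1 hm) hld) := by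
    ext j; simp [Finset.mem_attachFin]
  rw [h, Finset.card_attachFin, Finset.card_range]

lemma card_filter_not_lt_aux (d l : ℕ) (hld : l ≤ d) :
    (Finset.univ.filter (fun j : Fin d => ¬ (j : ℕ) < l)).card = d - l := by
  have h := Finset.card_filter_add_card_filter_not (s := (Finset.univ : Finset (Fin d)))
    (p := fun j : Fin d => (j : ℕ) < l)
  rw [card_filter_lt_aux d l hld] at h
  simp only [Finset.card_univ, Fintype.card_fin] at h
  omega

/-- **Elimination of the last `d − l` arguments** (first step in the proof of Theorem 3.1). -/
theorem stmt1
    (d l : ℕ) (hd : 1 ≤ d) (hl1 : 1 ≤ l) (hld : l ≤ d)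
    (t : ℝ) (ht : 0 < t)
    (x : ℝ → ℝ)
    -- `x` is càdlàg: right-continuous on `[0,∞)` with left limits at every `s > 0`
    (hx_rc : ∀ s : ℝ, 0 ≤ s → ContinuousWithinAt x (Set.Ici s) s)
    (hx_ll : ∀ s : ℝ, 0 < s → ∃ c : ℝ, Filter.Tendsto x (nhdsWithin s (Set.Iio s)) (nhds c))
    -- the realized quadratic variation converges
    (hQV : ∃ Q : ℝ, Filter.Tendsto
      (fun n : ℕ => ∑ i ∈ Finset.Icc 1 (Nat.floor ((n : ℝ) * t)), (incr x n i) ^ 2)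
      Filter.atTop (nhds Q))
    (L : (Fin d → ℝ) → ℝ) (hL : Continuous L)
    (H : (Fin d → ℝ) → ℝ)
    (hH : ∀ v, H v =
      (∏ i ∈ Finset.univ.filter (fun i : Fin d => (i : ℕ) < l), |v i| ^ 2) * L v) :
    Filter.Tendsto (fun n : ℕ =>
      (1 / (n : ℝ) ^ (d - l)) *
        ∑ i ∈ Fintype.piFinset (fun _ : Fin d => Finset.Icc 1 (Nat.floor ((n : ℝ) * t))),
          (H (fun j : Fin d => incr x n (i j)) -
           H (fun j : Fin d => if (j : ℕ) < l then incr x n (i j) else 0)))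
      Filter.atTop (nhds 0) := by
  classical
  rcases eq_or_lt_of_le hld with rfl | hlt
  · -- case l = d : the summand vanishes identically
    have hfun : ∀ n : ℕ, ∀ i ∈ Fintype.piFinset (fun _ : Fin l => Finset.Icc 1 (Nat.floor ((n : ℝ) * t))),
        (H (fun j : Fin l => incr x n (i j)) -
           H (fun j : Fin l => if (j : ℕ) < l then incr x n (i j) else 0)) = 0 := by
      intro n i _
      have h : (fun j : Fin l => if (j : ℕ) < l then incr x n (i j) else 0) =
          (fun j : Fin l => incr x n (i j)) := by
        funext j; simp [j.isLt]
      rw [h, sub_self]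
    have h0 : (fun n : ℕ =>
        (1 / (n : ℝ) ^ (l - l)) *
          ∑ i ∈ Fintype.piFinset (fun _ : Fin l => Finset.Icc 1 (Nat.floor ((n : ℝ) * t))),
            (H (fun j : Fin l => incr x n (i j)) -
             H (fun j : Fin l => if (j : ℕ) < l then incr x n (i j) else 0))) = fun _ => (0 : ℝ) := by
      funext n
      rw [Finset.sum_eq_zero (hfun n), mul_zero]
    rw [h0]
    exact tendsto_const_nhds
  -- main case l < d
  obtain ⟨Q, hQ⟩ := hQV
  obtain ⟨A₀, hA₀⟩ := hQ.bddAbove_range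
  set A : ℝ := max A₀ 1 with hAdef
  have hA1 : (1:ℝ) ≤ A := le_max_right _ _
  have hA0 : (0:ℝ) < A := lt_of_lt_of_le one_pos hA1
  have hQA : ∀ n : ℕ,
      (∑ i ∈ Finset.Icc 1 (Nat.floor ((n : ℝ) * t)), (incr x n i) ^ 2) ≤ A :=
    fun n => le_trans (hA₀ (Set.mem_range_self n)) (le_max_left _ _)
  have hsq : ∀ n : ℕ, ∀ i ∈ Finset.Icc 1 (Nat.floor ((n : ℝ) * t)), (incr x n i) ^ 2 ≤ A := by
    intro n i hi
    exact le_trans (Finset.single_le_sum (f := fun i => (incr x n i) ^ 2)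
      (fun j _ => sq_nonneg _) hi) (hQA n)
  set K : ℝ := Real.sqrt A with hKdef
  have hK0 : 0 ≤ K := Real.sqrt_nonneg A
  have habs : ∀ n : ℕ, ∀ i ∈ Finset.Icc 1 (Nat.floor ((n : ℝ) * t)), |incr x n i| ≤ K := by
    intro n i hi
    rw [← Real.sqrt_sq_eq_abs]
    exact Real.sqrt_le_sqrt (hsq n i hi)
  set S : Set (Fin d → ℝ) := Set.Icc (fun _ => -K) (fun _ => K) with hSdef
  have hScompact : IsCompact S := isCompact_Icc
  have hmemS : ∀ v : Fin d → ℝ, (∀ j, |v j| ≤ K) → v ∈ S := by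
    intro v hv
    exact ⟨fun j => (abs_le.1 (hv j)).1, fun j => (abs_le.1 (hv j)).2⟩
  obtain ⟨M₀, hM₀⟩ := hScompact.exists_bound_of_continuousOn hL.continuousOn
  set M : ℝ := max M₀ 1 with hMdef
  have hM1 : (1:ℝ) ≤ M := le_max_right _ _
  have hM : ∀ v ∈ S, |L v| ≤ M := by
    intro v hv
    exact le_trans (by simpa [Real.norm_eq_abs] using hM₀ v hv) (le_max_left _ _)
  have huc := hScompact.uniformContinuousOn_of_continuous hL.continuousOn
  rw [Metric.uniformContinuousOn_iff] at huc
  rw [Metric.tendsto_atTop]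
  intro ε hε
  have hC₁ : (0:ℝ) < A ^ l * t ^ (d - l) := by positivity
  set ε₁ : ℝ := ε / (2 * (A ^ l * t ^ (d - l))) with hε₁def
  have hε₁ : 0 < ε₁ := by positivity
  obtain ⟨δ, hδ0, hδ⟩ := huc ε₁ hε₁
  set cB : ℝ := A / (δ / 2) ^ 2 with hcBdef
  have hcB0 : 0 ≤ cB := by positivity
  have hcardB : ∀ n : ℕ,
      (((Finset.Icc 1 (Nat.floor ((n : ℝ) * t))).filter
        (fun a => δ / 2 < |incr x n a|)).card : ℝ) ≤ cB := by
    intro n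
    set B := (Finset.Icc 1 (Nat.floor ((n : ℝ) * t))).filter
      (fun a => δ / 2 < |incr x n a|) with hBdef
    have h1 : (B.card : ℝ) * (δ / 2) ^ 2 ≤ ∑ a ∈ B, (incr x n a) ^ 2 := by
      have hb : ∀ a ∈ B, (δ / 2) ^ 2 ≤ (incr x n a) ^ 2 := by
        intro a ha
        have hlt : δ / 2 < |incr x n a| := (Finset.mem_filter.1 ha).2
        calc (δ / 2) ^ 2 ≤ |incr x n a| ^ 2 := by nlinarith [abs_nonneg (incr x n a)]
          _ = (incr x n a) ^ 2 := sq_abs _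
      have := Finset.card_nsmul_le_sum B (fun a => (incr x n a) ^ 2) ((δ / 2) ^ 2) hb
      simpa [nsmul_eq_mul] using this
    have h2 : ∑ a ∈ B, (incr x n a) ^ 2 ≤ A :=
      le_trans (Finset.sum_le_sum_of_subset_of_nonneg (Finset.filter_subset _ _)
        (fun i _ _ => sq_nonneg _)) (hQA n)
    rw [hcBdef, le_div_iff₀ (by positivity)]
    nlinarith
  set C₂ : ℝ := 2 * M * (d - l : ℕ) * cB * A ^ l * t ^ (d - l - 1) with hC₂def
  have hC₂0 : 0 ≤ C₂ := by positivity
  have hhalf : ε₁ * (A ^ l * t ^ (d - l)) = ε / 2 := by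
    rw [hε₁def]; field_simp
  have main : ∀ n : ℕ, 1 ≤ n →
      |(1 / (n : ℝ) ^ (d - l)) *
        ∑ i ∈ Fintype.piFinset (fun _ : Fin d => Finset.Icc 1 (Nat.floor ((n : ℝ) * t))),
          (H (fun j : Fin d => incr x n (i j)) -
           H (fun j : Fin d => if (j : ℕ) < l then incr x n (i j) else 0))| ≤
      ε / 2 + C₂ / n := by
    intro n hn
    have hnpos : (0:ℝ) < n := by exact_mod_cast hn
    set NN : ℕ := Nat.floor ((n : ℝ) * t) with hNNdef
    set II : Finset ℕ := Finset.Icc 1 NN with hIIdef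
    set B : Finset ℕ := II.filter (fun a => δ / 2 < |incr x n a|) with hBdef
    set PF : Finset (Fin d → ℕ) := Fintype.piFinset (fun _ : Fin d => II) with hPFdef
    set P : (Fin d → ℕ) → ℝ :=
      fun i => ∏ j ∈ Finset.univ.filter (fun j : Fin d => (j : ℕ) < l),
        (incr x n (i j)) ^ 2 with hPdef
    have hP0 : ∀ i, 0 ≤ P i := fun i => Finset.prod_nonneg fun j _ => sq_nonneg _
    set v : (Fin d → ℕ) → (Fin d → ℝ) := fun i j => incr x n (i j) with hvdef
    set w : (Fin d → ℕ) → (Fin d → ℝ) :=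
      fun i j => if (j : ℕ) < l then incr x n (i j) else 0 with hwdef
    have hmemII : ∀ i ∈ PF, ∀ j, i j ∈ II := by
      intro i hi j
      exact (Fintype.mem_piFinset.1 hi) j
    have hvS : ∀ i ∈ PF, v i ∈ S := by
      intro i hi
      exact hmemS _ (fun j => habs n (i j) (hmemII i hi j))
    have hwS : ∀ i ∈ PF, w i ∈ S := by
      intro i hi
      refine hmemS _ (fun j => ?_)
      by_cases hj : (j : ℕ) < l
      · simpa [hwdef, hj] using habs n (i j) (hmemII i hi j)
      · simpa [hwdef, hj] using hK0
    have hkey : ∀ i ∈ PF,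
        H (fun j : Fin d => incr x n (i j)) -
          H (fun j : Fin d => if (j : ℕ) < l then incr x n (i j) else 0) =
        P i * (L (v i) - L (w i)) := by
      intro i _
      rw [hH, hH]
      have h1 : (∏ j ∈ Finset.univ.filter (fun j : Fin d => (j : ℕ) < l),
          |(fun j : Fin d => incr x n (i j)) j| ^ 2) = P i := by
        rw [hPdef]
        exact Finset.prod_congr rfl fun j _ => sq_abs _
      have h2 : (∏ j ∈ Finset.univ.filter (fun j : Fin d => (j : ℕ) < l),
          |(fun j : Fin d => if (j : ℕ) < l then incr x n (i j) else 0) j| ^ 2) = P i := by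
        rw [hPdef]
        refine Finset.prod_congr rfl fun j hj => ?_
        have hjl : (j : ℕ) < l := (Finset.mem_filter.1 hj).2
        simp only [if_pos hjl, sq_abs]
      rw [h1, h2, hvdef, hwdef]
      ring
    have step1 : |∑ i ∈ PF,
        (H (fun j : Fin d => incr x n (i j)) -
         H (fun j : Fin d => if (j : ℕ) < l then incr x n (i j) else 0))| ≤
        ∑ i ∈ PF, P i * |L (v i) - L (w i)| := by
      refine (Finset.abs_sum_le_sum_abs _ _).trans (le_of_eq ?_)
      refine Finset.sum_congr rfl fun i hi => ?_
      rw [hkey i hi, abs_mul, abs_of_nonneg (hP0 i)]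
    -- expansion of P as a product over all coordinates
    have hPexp : ∀ i : Fin d → ℕ,
        P i = ∏ j : Fin d, (if (j : ℕ) < l then (incr x n (i j)) ^ 2 else 1) := by
      intro i
      rw [hPdef]
      exact Finset.prod_filter _ _
    -- sum of P over the full grid
    have hsumP : ∑ i ∈ PF, P i ≤ A ^ l * (NN : ℝ) ^ (d - l) := by
      have he : ∑ i ∈ PF, P i =
          ∏ j : Fin d, ∑ a ∈ II, (if (j : ℕ) < l then (incr x n a) ^ 2 else 1) := by
        simp only [hPexp]
        rw [hPFdef]
        exact (Finset.prod_univ_sum (fun _ : Fin d => II)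
          (fun j a => if (j : ℕ) < l then (incr x n a) ^ 2 else 1)).symm
      rw [he]
      have hb : ∏ j : Fin d, ∑ a ∈ II, (if (j : ℕ) < l then (incr x n a) ^ 2 else 1) ≤
          ∏ j : Fin d, (if (j : ℕ) < l then A else (NN : ℝ)) := by
        refine Finset.prod_le_prod (fun j _ => Finset.sum_nonneg fun a _ => ?_)
          (fun j _ => ?_)
        · split_ifs
          · exact sq_nonneg _
          · norm_num
        · by_cases hj : (j : ℕ) < l
          · simp only [if_pos hj]
            exact hQA n
          · simp only [if_neg hj, Finset.sum_const, nsmul_eq_mul, mul_one, hIIdef,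
              Nat.card_Icc]
            norm_num
      refine hb.trans (le_of_eq ?_)
      rw [Finset.prod_ite, Finset.prod_const, Finset.prod_const,
        card_filter_lt_aux d l hld, card_filter_not_lt_aux d l hld]
    -- the "good" part
    have hgood : ∑ i ∈ PF.filter
          (fun i => ∀ j : Fin d, l ≤ (j : ℕ) → |incr x n (i j)| ≤ δ / 2),
          P i * |L (v i) - L (w i)| ≤ ε₁ * (A ^ l * (NN : ℝ) ^ (d - l)) := by
      have h1 : ∀ i ∈ PF.filter
          (fun i => ∀ j : Fin d, l ≤ (j : ℕ) → |incr x n (i j)| ≤ δ / 2),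
          P i * |L (v i) - L (w i)| ≤ P i * ε₁ := by
        intro i hi
        obtain ⟨hiPF, hig⟩ := Finset.mem_filter.1 hi
        have hdist : dist (v i) (w i) < δ := by
          have hle : dist (v i) (w i) ≤ δ / 2 := by
            rw [dist_pi_le_iff (by positivity)]
            intro j
            by_cases hj : (j : ℕ) < l
            · simp [hvdef, hwdef, hj, Real.dist_eq]
              positivity
            · have hb := hig j (le_of_not_gt hj)
              simp only [hvdef, hwdef, if_neg hj, Real.dist_eq, sub_zero]
              exact hb
          linarith
        have hLd : |L (v i) - L (w i)| < ε₁ := by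
          have := hδ (v i) (hvS i hiPF) (w i) (hwS i hiPF) hdist
          rwa [Real.dist_eq] at this
        exact mul_le_mul_of_nonneg_left (le_of_lt hLd) (hP0 i)
      calc ∑ i ∈ PF.filter
            (fun i => ∀ j : Fin d, l ≤ (j : ℕ) → |incr x n (i j)| ≤ δ / 2),
            P i * |L (v i) - L (w i)|
          ≤ ∑ i ∈ PF.filter
            (fun i => ∀ j : Fin d, l ≤ (j : ℕ) → |incr x n (i j)| ≤ δ / 2), P i * ε₁ :=
            Finset.sum_le_sum h1
        _ = ε₁ * ∑ i ∈ PF.filter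
            (fun i => ∀ j : Fin d, l ≤ (j : ℕ) → |incr x n (i j)| ≤ δ / 2), P i := by
            rw [Finset.mul_sum]
            exact Finset.sum_congr rfl fun i _ => mul_comm _ _
        _ ≤ ε₁ * ∑ i ∈ PF, P i := by
            refine mul_le_mul_of_nonneg_left ?_ hε₁.le
            exact Finset.sum_le_sum_of_subset_of_nonneg (Finset.filter_subset _ _)
              (fun i _ _ => hP0 i)
        _ ≤ ε₁ * (A ^ l * (NN : ℝ) ^ (d - l)) :=
            mul_le_mul_of_nonneg_left hsumP hε₁.le
    -- the "bad" part
    set FC : Finset (Fin d) := Finset.univ.filter (fun j : Fin d => ¬ (j : ℕ) < l)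
      with hFCdef
    set SS : Fin d → Finset (Fin d → ℕ) :=
      fun j₀ => Fintype.piFinset (fun j => if j = j₀ then B else II) with hSSdef
    have hbad_subset : PF.filter
        (fun i => ¬ ∀ j : Fin d, l ≤ (j : ℕ) → |incr x n (i j)| ≤ δ / 2) ⊆
        FC.biUnion SS := by
      intro i hi
      obtain ⟨hiPF, hig⟩ := Finset.mem_filter.1 hi
      push_neg at hig
      obtain ⟨j₀, hj₀l, hj₀B⟩ := hig
      refine Finset.mem_biUnion.2 ⟨j₀, Finset.mem_filter.2
        ⟨Finset.mem_univ _, not_lt.2 hj₀l⟩, ?_⟩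
      rw [hSSdef]
      rw [Fintype.mem_piFinset]
      intro j
      by_cases hj : j = j₀
      · subst hj
        simp only [if_pos rfl]
        exact Finset.mem_filter.2 ⟨hmemII i hiPF j, hj₀B⟩
      · simp only [if_neg hj]
        exact hmemII i hiPF j
    have hSSsum : ∀ j₀ ∈ FC, ∑ i ∈ SS j₀, P i ≤ cB * (A ^ l * (NN : ℝ) ^ (d - l - 1)) := by
      intro j₀ hj₀
      have hj₀l : ¬ (j₀ : ℕ) < l := by
        have := (Finset.mem_filter.1 hj₀).2
        simpa using this
      have he : ∑ i ∈ SS j₀, P i =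
          ∏ j : Fin d, ∑ a ∈ (if j = j₀ then B else II),
            (if (j : ℕ) < l then (incr x n a) ^ 2 else 1) := by
        simp only [hPexp]
        simp only [hSSdef]
        exact (Finset.prod_univ_sum (fun j : Fin d => if j = j₀ then B else II)
          (fun j a => if (j : ℕ) < l then (incr x n a) ^ 2 else 1)).symm
      rw [he, ← Finset.mul_prod_erase _ _ (Finset.mem_univ j₀)]
      have hc0 : ∀ j : Fin d, 0 ≤ ∑ a ∈ (if j = j₀ then B else II),
          (if (j : ℕ) < l then (incr x n a) ^ 2 else 1) := by
        intro j
        refine Finset.sum_nonneg fun a _ => ?_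
        split_ifs
        · exact sq_nonneg _
        · norm_num
      have hcj₀ : ∑ a ∈ (if j₀ = j₀ then B else II),
          (if (j₀ : ℕ) < l then (incr x n a) ^ 2 else 1) ≤ cB := by
        simp only [if_pos rfl, if_neg hj₀l, Finset.sum_const, nsmul_eq_mul, mul_one]
        exact hcardB n
      have herase : ∏ j ∈ Finset.univ.erase j₀, ∑ a ∈ (if j = j₀ then B else II),
          (if (j : ℕ) < l then (incr x n a) ^ 2 else 1) ≤
          A ^ l * (NN : ℝ) ^ (d - l - 1) := by
        have hb : ∏ j ∈ Finset.univ.erase j₀, ∑ a ∈ (if j = j₀ then B else II),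
            (if (j : ℕ) < l then (incr x n a) ^ 2 else 1) ≤
            ∏ j ∈ Finset.univ.erase j₀, (if (j : ℕ) < l then A else (NN : ℝ)) := by
          refine Finset.prod_le_prod (fun j _ => hc0 j) (fun j hj => ?_)
          have hjne : j ≠ j₀ := (Finset.mem_erase.1 hj).1
          rw [if_neg hjne]
          by_cases hjl : (j : ℕ) < l
          · simp only [if_pos hjl]
            exact hQA n
          · simp only [if_neg hjl, Finset.sum_const, nsmul_eq_mul, mul_one, hIIdef,
              Nat.card_Icc]
            norm_num
        refine hb.trans (le_of_eq ?_)
        rw [Finset.prod_ite, Finset.prod_const, Finset.prod_const]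
        have h1 : ((Finset.univ.erase j₀).filter (fun j : Fin d => (j : ℕ) < l)).card
            = l := by
          rw [Finset.filter_erase, Finset.erase_eq_of_notMem (by simp only [Finset.mem_filter]; omega),
            card_filter_lt_aux d l hld]
        have h2 : ((Finset.univ.erase j₀).filter (fun j : Fin d => ¬ (j : ℕ) < l)).card
            = d - l - 1 := by
          rw [Finset.filter_erase, Finset.card_erase_of_mem (by simp only [Finset.mem_filter, Finset.mem_univ, true_and]; omega),
            card_filter_not_lt_aux d l hld]
        rw [h1, h2]
      exact mul_le_mul hcj₀ herase (Finset.prod_nonneg fun j _ => hc0 j) hcB0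
    have hbad : ∑ i ∈ PF.filter
        (fun i => ¬ ∀ j : Fin d, l ≤ (j : ℕ) → |incr x n (i j)| ≤ δ / 2),
        P i * |L (v i) - L (w i)| ≤
        2 * M * ((d - l : ℕ) : ℝ) * cB * A ^ l * (NN : ℝ) ^ (d - l - 1) := by
      have h1 : ∀ i ∈ PF.filter
          (fun i => ¬ ∀ j : Fin d, l ≤ (j : ℕ) → |incr x n (i j)| ≤ δ / 2),
          P i * |L (v i) - L (w i)| ≤ P i * (2 * M) := by
        intro i hi
        have hiPF := (Finset.mem_filter.1 hi).1
        refine mul_le_mul_of_nonneg_left ?_ (hP0 i)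
        have hv' := hM _ (hvS i hiPF)
        have hw' := hM _ (hwS i hiPF)
        calc |L (v i) - L (w i)| ≤ |L (v i)| + |L (w i)| := abs_sub _ _
          _ ≤ 2 * M := by linarith
      calc ∑ i ∈ PF.filter
            (fun i => ¬ ∀ j : Fin d, l ≤ (j : ℕ) → |incr x n (i j)| ≤ δ / 2),
            P i * |L (v i) - L (w i)|
          ≤ ∑ i ∈ PF.filter
            (fun i => ¬ ∀ j : Fin d, l ≤ (j : ℕ) → |incr x n (i j)| ≤ δ / 2),
            P i * (2 * M) := Finset.sum_le_sum h1
        _ = (2 * M) * ∑ i ∈ PF.filter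
            (fun i => ¬ ∀ j : Fin d, l ≤ (j : ℕ) → |incr x n (i j)| ≤ δ / 2), P i := by
            rw [Finset.mul_sum]
            exact Finset.sum_congr rfl fun i _ => mul_comm _ _
        _ ≤ (2 * M) * ∑ i ∈ FC.biUnion SS, P i := by
            refine mul_le_mul_of_nonneg_left ?_ (by linarith)
            exact Finset.sum_le_sum_of_subset_of_nonneg hbad_subset (fun i _ _ => hP0 i)
        _ ≤ (2 * M) * ∑ j₀ ∈ FC, ∑ i ∈ SS j₀, P i := by
            refine mul_le_mul_of_nonneg_left ?_ (by linarith)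
            exact sum_biUnion_le_aux FC SS P hP0
        _ ≤ (2 * M) * ∑ j₀ ∈ FC, cB * (A ^ l * (NN : ℝ) ^ (d - l - 1)) := by
            refine mul_le_mul_of_nonneg_left (Finset.sum_le_sum hSSsum) (by linarith)
        _ = 2 * M * ((d - l : ℕ) : ℝ) * cB * A ^ l * (NN : ℝ) ^ (d - l - 1) := by
            rw [Finset.sum_const, hFCdef, card_filter_not_lt_aux d l hld,
              nsmul_eq_mul]
            ring
    -- combine
    have hsplit := Finset.sum_filter_add_sum_filter_not PF
      (fun i => ∀ j : Fin d, l ≤ (j : ℕ) → |incr x n (i j)| ≤ δ / 2)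
      (fun i => P i * |L (v i) - L (w i)|)
    have hsum_total : ∑ i ∈ PF, P i * |L (v i) - L (w i)| ≤
        ε₁ * (A ^ l * (NN : ℝ) ^ (d - l)) +
        2 * M * ((d - l : ℕ) : ℝ) * cB * A ^ l * (NN : ℝ) ^ (d - l - 1) := by
      rw [← hsplit]
      exact add_le_add hgood hbad
    -- numeric bounds
    have hNle : (NN : ℝ) ≤ (n : ℝ) * t := Nat.floor_le (by positivity)
    have hNN0 : (0 : ℝ) ≤ (NN : ℝ) := Nat.cast_nonneg _
    have hne : (0 : ℝ) < (n : ℝ) ^ (d - l) := by positivity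
    have e1 : (1 / (n : ℝ) ^ (d - l)) * (ε₁ * (A ^ l * (NN : ℝ) ^ (d - l))) ≤ ε / 2 := by
      have hpow : (NN : ℝ) ^ (d - l) ≤ (n : ℝ) ^ (d - l) * t ^ (d - l) := by
        calc (NN : ℝ) ^ (d - l) ≤ ((n : ℝ) * t) ^ (d - l) :=
              pow_le_pow_left₀ hNN0 hNle _
          _ = (n : ℝ) ^ (d - l) * t ^ (d - l) := mul_pow _ _ _
      rw [one_div, inv_mul_le_iff₀ hne]
      calc ε₁ * (A ^ l * (NN : ℝ) ^ (d - l))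
          ≤ ε₁ * (A ^ l * ((n : ℝ) ^ (d - l) * t ^ (d - l))) := by
            refine mul_le_mul_of_nonneg_left ?_ hε₁.le
            exact mul_le_mul_of_nonneg_left hpow (by positivity)
        _ = ε₁ * (A ^ l * t ^ (d - l)) * (n : ℝ) ^ (d - l) := by ring
        _ = ε / 2 * (n : ℝ) ^ (d - l) := by rw [hhalf]
        _ = (n : ℝ) ^ (d - l) * (ε / 2) := mul_comm _ _
    have e2 : (1 / (n : ℝ) ^ (d - l)) *
        (2 * M * ((d - l : ℕ) : ℝ) * cB * A ^ l * (NN : ℝ) ^ (d - l - 1)) ≤ C₂ / n := by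
      have hpow : (NN : ℝ) ^ (d - l - 1) ≤ (n : ℝ) ^ (d - l - 1) * t ^ (d - l - 1) := by
        calc (NN : ℝ) ^ (d - l - 1) ≤ ((n : ℝ) * t) ^ (d - l - 1) :=
              pow_le_pow_left₀ hNN0 hNle _
          _ = (n : ℝ) ^ (d - l - 1) * t ^ (d - l - 1) := mul_pow _ _ _
      have hsplitpow : (n : ℝ) ^ (d - l) = (n : ℝ) ^ (d - l - 1) * n := by
        rw [← pow_succ]
        congr 1
        omega
      calc (1 / (n : ℝ) ^ (d - l)) *
            (2 * M * ((d - l : ℕ) : ℝ) * cB * A ^ l * (NN : ℝ) ^ (d - l - 1))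
          ≤ (1 / (n : ℝ) ^ (d - l)) *
            (2 * M * ((d - l : ℕ) : ℝ) * cB * A ^ l *
              ((n : ℝ) ^ (d - l - 1) * t ^ (d - l - 1))) := by
            refine mul_le_mul_of_nonneg_left ?_ (by positivity)
            refine mul_le_mul_of_nonneg_left hpow (by positivity)
        _ = C₂ / n := by
            rw [hC₂def, hsplitpow]
            have h1 : (0:ℝ) < (n : ℝ) ^ (d - l - 1) := by positivity
            field_simp
    calc |(1 / (n : ℝ) ^ (d - l)) *
        ∑ i ∈ PF,
          (H (fun j : Fin d => incr x n (i j)) -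
           H (fun j : Fin d => if (j : ℕ) < l then incr x n (i j) else 0))|
        = (1 / (n : ℝ) ^ (d - l)) * |∑ i ∈ PF,
          (H (fun j : Fin d => incr x n (i j)) -
           H (fun j : Fin d => if (j : ℕ) < l then incr x n (i j) else 0))| := by
          rw [abs_mul, abs_of_nonneg (by positivity : (0:ℝ) ≤ 1 / (n : ℝ) ^ (d - l))]
      _ ≤ (1 / (n : ℝ) ^ (d - l)) *
          (ε₁ * (A ^ l * (NN : ℝ) ^ (d - l)) +
           2 * M * ((d - l : ℕ) : ℝ) * cB * A ^ l * (NN : ℝ) ^ (d - l - 1)) := by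
          refine mul_le_mul_of_nonneg_left (step1.trans hsum_total) (by positivity)
      _ = (1 / (n : ℝ) ^ (d - l)) * (ε₁ * (A ^ l * (NN : ℝ) ^ (d - l))) +
          (1 / (n : ℝ) ^ (d - l)) *
          (2 * M * ((d - l : ℕ) : ℝ) * cB * A ^ l * (NN : ℝ) ^ (d - l - 1)) := by ring
      _ ≤ ε / 2 + C₂ / n := add_le_add e1 e2
  obtain ⟨n₀, hn₀⟩ := exists_nat_gt (2 * C₂ / ε)
  refine ⟨n₀ + 1, fun n hn => ?_⟩
  have hn1 : 1 ≤ n := le_trans (Nat.le_add_left 1 n₀) hn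
  have hnpos : (0:ℝ) < n := by exact_mod_cast hn1
  have hnn₀ : (n₀ : ℝ) < n := by exact_mod_cast Nat.lt_of_lt_of_le (Nat.lt_succ_self n₀) hn
  have h2 : C₂ / n < ε / 2 := by
    rw [div_lt_iff₀ hnpos]
    have : 2 * C₂ / ε < (n : ℝ) := lt_trans hn₀ hnn₀
    rw [div_lt_iff₀ hε] at this
    nlinarith
  rw [Real.dist_eq, sub_zero]
  calc _ ≤ ε / 2 + C₂ / n := main n hn1
    _ < ε := by linarith
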